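/- Let S be a subset of {1,2,3,...} × {1,2,3,...} that is closed under componentwise addition. Suppose (a_{i,j})_{i,j≥1} and (b_{i,j})_{i,j≥1} are families of integers related by the identity 1 + Σ_{i,j≥1} a_{i,j} U^i T^j = Π_{i,j≥1} (1 − U^i T^j)^{b_{i,j}} of formal power series in ℤ⟦U,T⟧ (the product understood coefficientwise: for all m, n ≥ 1 the coefficient of U^m T^n of the left side equals that of Π_{1≤i≤m, 1≤j≤n}(1 − U^i T^j)^{b_{i,j}}). Then a_{i,j} = 0 for all (i,j) ∉ S if and only if b_{i,j} = 0 for all (i,j) ∉ S. -/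

import Mathlib

/-- Integer power of an element of a monoid with zero: for units this agrees with
the `zpow` in the unit group; negative exponents use `Ring.inverse`. -/
noncomputable def ringZpow {R : Type*} [MonoidWithZero R] (f : R) (n : ℤ) : R :=
  if 0 ≤ n then f ^ n.toNat else Ring.inverse f ^ (-n).toNat

/-- The coefficient of `U^m T^n` in `ℤ⟦U,T⟧ = MvPowerSeries (Fin 2) ℤ`, `U = X 0`, `T = X 1`. -/
noncomputable def coeffUT (m n : ℕ) : MvPowerSeries (Fin 2) ℤ →ₗ[ℤ] ℤ :=
  MvPowerSeries.coeff (Finsupp.single (0 : Fin 2) m + Finsupp.single (1 : Fin 2) n)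

namespace SubsetLemmaAux

open MvPowerSeries

/-- short name for the base ring -/
local notation "R2" => MvPowerSeries (Fin 2) ℤ

/-- The exponent `U^i T^j`. -/
noncomputable def eIJ (i j : ℕ) : Fin 2 →₀ ℕ := Finsupp.single (0 : Fin 2) i + Finsupp.single (1 : Fin 2) j

lemma eIJ_apply0 (i j : ℕ) : eIJ i j 0 = i := by
  simp [eIJ, Finsupp.single_apply]

lemma eIJ_apply1 (i j : ℕ) : eIJ i j 1 = j := by
  simp [eIJ, Finsupp.single_apply]

lemma eIJ_ne_zero {i : ℕ} (hi : 1 ≤ i) (j : ℕ) : eIJ i j ≠ 0 := by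
  intro h
  have := congrArg (fun e : Fin 2 →₀ ℕ => e 0) h
  simp [eIJ_apply0] at this
  omega

lemma eIJ_add (i j i' j' : ℕ) : eIJ (i + i') (j + j') = eIJ i j + eIJ i' j' := by
  simp only [eIJ, Finsupp.single_add]
  abel

lemma eIJ_inj {i j i' j' : ℕ} (h : eIJ i j = eIJ i' j') : i = i' ∧ j = j' := by
  constructor
  · have := congrArg (fun e : Fin 2 →₀ ℕ => e 0) h
    simpa [eIJ_apply0] using this
  · have := congrArg (fun e : Fin 2 →₀ ℕ => e 1) h
    simpa [eIJ_apply1] using this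

/-- `f` is supported in the additive submonoid `M`. -/
def suppIn (M : AddSubmonoid (Fin 2 →₀ ℕ)) (f : R2) : Prop :=
  ∀ e : Fin 2 →₀ ℕ, MvPowerSeries.coeff e f ≠ 0 → e ∈ M

lemma suppIn_one (M : AddSubmonoid (Fin 2 →₀ ℕ)) : suppIn M 1 := by
  intro e he
  rw [MvPowerSeries.coeff_one] at he
  by_cases h : e = 0
  · subst h; exact M.zero_mem
  · simp [h] at he

lemma suppIn_mul {M : AddSubmonoid (Fin 2 →₀ ℕ)} {f g : R2}
    (hf : suppIn M f) (hg : suppIn M g) : suppIn M (f * g) := by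
  intro e he
  rw [MvPowerSeries.coeff_mul] at he
  obtain ⟨p, hp, hne⟩ := Finset.exists_ne_zero_of_sum_ne_zero he
  rw [Finset.HasAntidiagonal.mem_antidiagonal] at hp
  rw [← hp]
  exact M.add_mem (hf _ (left_ne_zero_of_mul hne)) (hg _ (right_ne_zero_of_mul hne))

lemma suppIn_pow {M : AddSubmonoid (Fin 2 →₀ ℕ)} {f : R2}
    (hf : suppIn M f) (k : ℕ) : suppIn M (f ^ k) := by
  induction k with
  | zero => simpa using suppIn_one M
  | succ k ih => rw [pow_succ]; exact suppIn_mul ih hf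

lemma deg_pos {x : Fin 2 →₀ ℕ} (hx : x ≠ 0) : 0 < x 0 + x 1 := by
  by_contra h
  push_neg at h
  apply hx
  ext s
  have h0 : x 0 = 0 := by omega
  have h1 : x 1 = 0 := by omega
  fin_cases s <;> simp_all

lemma suppIn_of_mul_eq_one {M : AddSubmonoid (Fin 2 →₀ ℕ)} {f g : R2}
    (hc : MvPowerSeries.coeff 0 f = 1) (hfg : f * g = 1) (hf : suppIn M f) :
    suppIn M g := by
  suffices H : ∀ k : ℕ, ∀ e : Fin 2 →₀ ℕ, e 0 + e 1 = k →
      MvPowerSeries.coeff e g ≠ 0 → e ∈ M by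
    intro e he; exact H _ e rfl he
  intro k
  induction k using Nat.strong_induction_on with
  | _ k IH =>
    intro e hk he
    by_cases h0 : e = 0
    · subst h0; exact M.zero_mem
    have h1 : MvPowerSeries.coeff e (f * g) = 0 := by
      rw [hfg, MvPowerSeries.coeff_one, if_neg h0]
    rw [MvPowerSeries.coeff_mul] at h1
    have hmem : ((0 : Fin 2 →₀ ℕ), e) ∈ Finset.HasAntidiagonal.antidiagonal e := by
      rw [Finset.HasAntidiagonal.mem_antidiagonal]; simp
    have hsplit := Finset.add_sum_erase _
      (fun p : (Fin 2 →₀ ℕ) × (Fin 2 →₀ ℕ) =>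
        MvPowerSeries.coeff p.1 f * MvPowerSeries.coeff p.2 g) hmem
    rw [h1] at hsplit
    have hrest : ∑ p ∈ (Finset.HasAntidiagonal.antidiagonal e).erase (0, e),
        MvPowerSeries.coeff p.1 f * MvPowerSeries.coeff p.2 g ≠ 0 := by
      intro hz
      rw [hz] at hsplit
      simp only [hc, one_mul, add_zero] at hsplit
      exact he hsplit
    obtain ⟨p, hp, hne⟩ := Finset.exists_ne_zero_of_sum_ne_zero hrest
    rw [Finset.mem_erase, Finset.HasAntidiagonal.mem_antidiagonal] at hp
    obtain ⟨hpne, hpadd⟩ := hp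
    have hp1 : p.1 ≠ 0 := by
      intro h
      apply hpne
      have : p.2 = e := by rw [← hpadd, h, zero_add]
      exact Prod.ext h this
    have hm1 : p.1 ∈ M := hf _ (left_ne_zero_of_mul hne)
    have hd : p.2 0 + p.2 1 < k := by
      have h0' := congrArg (fun x : Fin 2 →₀ ℕ => x 0) hpadd
      have h1' := congrArg (fun x : Fin 2 →₀ ℕ => x 1) hpadd
      simp only [Finsupp.add_apply] at h0' h1'
      have := deg_pos hp1
      omega
    have hm2 : p.2 ∈ M := IH _ hd p.2 rfl (right_ne_zero_of_mul hne)
    rw [← hpadd]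
    exact M.add_mem hm1 hm2

lemma isUnit_of_cc_one {f : R2} (hc : constantCoeff f = 1) : IsUnit f :=
  IsUnit.of_mul_eq_one (invOfUnit f 1) (mul_invOfUnit f 1 (by simp [hc]))

lemma mul_ringInverse {f : R2} (hc : constantCoeff f = 1) :
    f * Ring.inverse f = 1 :=
  Ring.mul_inverse_cancel f (isUnit_of_cc_one hc)

lemma cc_ringInverse {f : R2} (hc : constantCoeff f = 1) :
    constantCoeff (Ring.inverse f) = 1 := by
  have := congrArg (constantCoeff) (mul_ringInverse hc)
  rw [map_mul, hc, one_mul, map_one] at this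
  exact this

lemma suppIn_ringInverse {M : AddSubmonoid (Fin 2 →₀ ℕ)} {f : R2}
    (hc : constantCoeff f = 1) (hf : suppIn M f) :
    suppIn M (Ring.inverse f) := by
  refine suppIn_of_mul_eq_one ?_ (mul_ringInverse hc) hf
  rw [MvPowerSeries.coeff_zero_eq_constantCoeff]; exact hc

lemma cc_ringZpow {f : R2} (hc : constantCoeff f = 1) (b : ℤ) :
    constantCoeff (ringZpow f b) = 1 := by
  unfold ringZpow
  split
  · rw [map_pow, hc, one_pow]
  · rw [map_pow, cc_ringInverse hc, one_pow]

lemma suppIn_ringZpow {M : AddSubmonoid (Fin 2 →₀ ℕ)} {f : R2}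
    (hc : constantCoeff f = 1) (hf : suppIn M f) (b : ℤ) :
    suppIn M (ringZpow f b) := by
  unfold ringZpow
  split
  · exact suppIn_pow hf _
  · exact suppIn_pow (suppIn_ringInverse hc hf) _

lemma X_pow_mul_X_pow (i j : ℕ) :
    (X (0 : Fin 2) : R2) ^ i * X 1 ^ j = monomial (eIJ i j) 1 := by
  rw [X_pow_eq, X_pow_eq, monomial_mul_monomial, one_mul]
  rfl

lemma cc_one_sub {i : ℕ} (hi : 1 ≤ i) (j : ℕ) :
    constantCoeff (1 - (X (0 : Fin 2) : R2) ^ i * X 1 ^ j) = 1 := by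
  rw [map_sub, map_one, X_pow_mul_X_pow, ← MvPowerSeries.coeff_zero_eq_constantCoeff,
    MvPowerSeries.coeff_monomial, if_neg (fun h => eIJ_ne_zero hi j h.symm), sub_zero]

lemma suppIn_one_sub {M : AddSubmonoid (Fin 2 →₀ ℕ)} {i j : ℕ} (h : eIJ i j ∈ M) :
    suppIn M (1 - (X (0 : Fin 2) : R2) ^ i * X 1 ^ j) := by
  intro e he
  rw [map_sub, X_pow_mul_X_pow, MvPowerSeries.coeff_one, MvPowerSeries.coeff_monomial] at he
  by_cases h0 : e = 0
  · subst h0; exact M.zero_mem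
  by_cases h1 : e = eIJ i j
  · subst h1; exact h
  · simp [h0, h1] at he

/-- Key splitting: if `g` is supported in multiples of `eIJ m n` with `m ≥ 1`, then the
coefficient of `eIJ m n` in `g * P` has only two contributions. -/
lemma coeff_mul_split {m : ℕ} (hm : 1 ≤ m) (n : ℕ) {g : R2} (P : R2)
    (hg : suppIn (AddSubmonoid.closure {eIJ m n}) g) :
    MvPowerSeries.coeff (eIJ m n) (g * P) =
      MvPowerSeries.coeff 0 g * MvPowerSeries.coeff (eIJ m n) P +
      MvPowerSeries.coeff (eIJ m n) g * MvPowerSeries.coeff 0 P := by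
  rw [MvPowerSeries.coeff_mul]
  refine Finset.sum_eq_add ((0 : Fin 2 →₀ ℕ), eIJ m n) (eIJ m n, (0 : Fin 2 →₀ ℕ)) ?_ ?_ ?_ ?_
  · intro h
    have : (0 : Fin 2 →₀ ℕ) = eIJ m n := congrArg Prod.fst h
    exact eIJ_ne_zero hm n this.symm
  · intro c hc hcne
    obtain ⟨c1, c2⟩ := c
    obtain ⟨hne1, hne2⟩ := hcne
    rw [Finset.HasAntidiagonal.mem_antidiagonal] at hc
    by_contra hcz
    have hc1 : c1 ∈ AddSubmonoid.closure {eIJ m n} := hg _ (left_ne_zero_of_mul hcz)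
    obtain ⟨k, hk⟩ := AddSubmonoid.mem_closure_singleton.mp hc1
    have h0 : c1 0 + c2 0 = m := by
      have := congrArg (fun x : Fin 2 →₀ ℕ => x 0) hc
      simpa [Finsupp.add_apply, eIJ_apply0] using this
    have hc10 : c1 0 = k * m := by
      rw [← hk]; simp [Finsupp.smul_apply, eIJ_apply0]
    have hk1 : k ≤ 1 := by
      by_contra hk2
      push_neg at hk2
      have : 2 * m ≤ k * m := Nat.mul_le_mul_right m hk2
      omega
    interval_cases k
    · apply hne1
      rw [zero_smul] at hk
      have : c2 = eIJ m n := by rw [← hc, ← hk, zero_add]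
      exact Prod.ext hk.symm this
    · apply hne2
      rw [one_smul] at hk
      have hc2 : c2 = 0 := by
        have h' : c1 + c2 = c1 + 0 := by rw [add_zero, hc, ← hk]
        exact add_left_cancel h'
      exact Prod.ext hk.symm hc2
  · intro h
    exact absurd (by rw [Finset.HasAntidiagonal.mem_antidiagonal, zero_add]) h
  · intro h
    exact absurd (by rw [Finset.HasAntidiagonal.mem_antidiagonal, add_zero]) h

lemma coeff_e_mul {m : ℕ} (hm : 1 ≤ m) (n : ℕ) {g h : R2}
    (hgc : constantCoeff g = 1) (hhc : constantCoeff h = 1)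
    (hg : suppIn (AddSubmonoid.closure {eIJ m n}) g) :
    MvPowerSeries.coeff (eIJ m n) (g * h) =
      MvPowerSeries.coeff (eIJ m n) g + MvPowerSeries.coeff (eIJ m n) h := by
  rw [coeff_mul_split hm n h hg, MvPowerSeries.coeff_zero_eq_constantCoeff]
  simp only [hgc, hhc, one_mul, mul_one]
  ring

lemma coeff_e_pow {m : ℕ} (hm : 1 ≤ m) (n : ℕ) {g : R2}
    (hgc : constantCoeff g = 1)
    (hg : suppIn (AddSubmonoid.closure {eIJ m n}) g) (k : ℕ) :
    MvPowerSeries.coeff (eIJ m n) (g ^ k) = k * MvPowerSeries.coeff (eIJ m n) g := by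
  induction k with
  | zero =>
    rw [pow_zero, MvPowerSeries.coeff_one, if_neg (eIJ_ne_zero hm n)]
    simp
  | succ k ih =>
    rw [pow_succ]
    rw [coeff_e_mul hm n (by rw [map_pow, hgc, one_pow]) hgc (suppIn_pow hg k), ih]
    push_cast
    ring

lemma coeff_e_ringZpow {m n : ℕ} (hm : 1 ≤ m) (hn : 1 ≤ n) (b : ℤ) :
    MvPowerSeries.coeff (eIJ m n)
      (ringZpow (1 - (X (0 : Fin 2) : R2) ^ m * X 1 ^ n) (b)) = -b := by
  set f : R2 := 1 - (X (0 : Fin 2) : R2) ^ m * X 1 ^ n with hf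
  have hcc : constantCoeff f = 1 := cc_one_sub hm n
  have hsupp : suppIn (AddSubmonoid.closure {eIJ m n}) f :=
    suppIn_one_sub (AddSubmonoid.subset_closure (Set.mem_singleton (eIJ m n)))
  have hcf : MvPowerSeries.coeff (eIJ m n) f = -1 := by
    rw [hf, map_sub, X_pow_mul_X_pow, MvPowerSeries.coeff_one,
      if_neg (eIJ_ne_zero hm n), MvPowerSeries.coeff_monomial, if_pos rfl]
    ring
  unfold ringZpow
  split
  · rename_i hb
    rw [coeff_e_pow hm n hcc hsupp, hcf]
    have : (b.toNat : ℤ) = b := Int.toNat_of_nonneg hb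
    rw [this]; ring
  · rename_i hb
    push_neg at hb
    have hinvcc : constantCoeff (Ring.inverse f) = 1 := cc_ringInverse hcc
    have hinvsupp : suppIn (AddSubmonoid.closure {eIJ m n}) (Ring.inverse f) :=
      suppIn_ringInverse hcc hsupp
    have hcinv : MvPowerSeries.coeff (eIJ m n) (Ring.inverse f) = 1 := by
      have h1 := congrArg (MvPowerSeries.coeff (eIJ m n)) (mul_ringInverse hcc)
      rw [coeff_e_mul hm n hcc hinvcc hsupp, hcf, MvPowerSeries.coeff_one,
        if_neg (eIJ_ne_zero hm n)] at h1
      linarith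
    rw [coeff_e_pow hm n hinvcc hinvsupp, hcinv]
    have : ((-b).toNat : ℤ) = -b := Int.toNat_of_nonneg (by omega)
    rw [this]; ring

/-- The additive monoid hom `(ℕ × ℕ) →+ (Fin 2 →₀ ℕ)` sending `(i,j)` to `eIJ i j`. -/
noncomputable def phi : ℕ × ℕ →+ (Fin 2 →₀ ℕ) where
  toFun p := eIJ p.1 p.2
  map_zero' := by simp [eIJ]
  map_add' p q := by
    show eIJ (p.1 + q.1) (p.2 + q.2) = _
    rw [eIJ_add]

end SubsetLemmaAux

open SubsetLemmaAux MvPowerSeries in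
/-- Lemma 4.3 (SubsetLemma): let `S ⊆ {1,2,…} × {1,2,…}` be closed under componentwise addition,
and suppose the integer families `(a_{i,j})` and `(b_{i,j})` (for `i, j ≥ 1`) satisfy
`1 + Σ a_{i,j} U^i T^j = ∏_{i,j ≥ 1} (1 - U^i T^j)^{b_{i,j}}` coefficientwise.
Then `a_{i,j} = 0` for all `(i,j) ∉ S` if and only if `b_{i,j} = 0` for all `(i,j) ∉ S`. -/
theorem statement5 (S : Set (ℕ × ℕ))
    (hS1 : ∀ p ∈ S, 1 ≤ p.1 ∧ 1 ≤ p.2)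
    (hSadd : ∀ p ∈ S, ∀ q ∈ S, p + q ∈ S)
    (a b : ℕ → ℕ → ℤ)
    (hab : ∀ m n : ℕ, 1 ≤ m → 1 ≤ n →
      a m n =
        coeffUT m n
          (∏ i ∈ Finset.Icc 1 m, ∏ j ∈ Finset.Icc 1 n,
            ringZpow (1 - MvPowerSeries.X (0 : Fin 2) ^ i * MvPowerSeries.X (1 : Fin 2) ^ j)
              (b i j))) :
    (∀ i j : ℕ, 1 ≤ i → 1 ≤ j → (i, j) ∉ S → a i j = 0) ↔
    (∀ i j : ℕ, 1 ≤ i → 1 ≤ j → (i, j) ∉ S → b i j = 0) := by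
  classical
  set M : AddSubmonoid (Fin 2 →₀ ℕ) :=
    AddSubmonoid.closure ((fun p : ℕ × ℕ => eIJ p.1 p.2) '' S) with hM
  -- membership in closure S implies 0 or in S
  have hclos : ∀ p ∈ AddSubmonoid.closure S, p = 0 ∨ p ∈ S := by
    intro p hp
    induction hp using AddSubmonoid.closure_induction with
    | mem x hx => exact Or.inr hx
    | zero => exact Or.inl rfl
    | add x y hx hy ihx ihy =>
      rcases ihx with rfl | hx'
      · rcases ihy with rfl | hy'
        · left; simp
        · right; simpa using hy'
      · rcases ihy with rfl | hy'
        · right; simpa using hx'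
        · right; exact hSadd _ hx' _ hy'
  have hMmap : M = AddSubmonoid.map phi (AddSubmonoid.closure S) := by
    rw [AddMonoidHom.map_mclosure]
    rfl
  -- eIJ m n ∈ M implies (m, n) ∈ S when m ≥ 1
  have hMS : ∀ m n : ℕ, 1 ≤ m → eIJ m n ∈ M → (m, n) ∈ S := by
    intro m n hm hmem
    rw [hMmap] at hmem
    obtain ⟨p, hp, hpe⟩ := hmem
    have hpeq : p = (m, n) := by
      obtain ⟨h1, h2⟩ := eIJ_inj hpe
      exact Prod.ext h1 h2
    subst hpeq
    rcases hclos _ hp with h | h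
    · exfalso
      have : m = 0 := congrArg Prod.fst h
      omega
    · exact h
  -- factors in S are supported in M
  have hfacS : ∀ i j : ℕ, (i, j) ∈ S → ∀ c : ℤ,
      suppIn M (ringZpow (1 - (X (0 : Fin 2) : MvPowerSeries (Fin 2) ℤ) ^ i * X 1 ^ j) c) := by
    intro i j hij c
    have hi : 1 ≤ i := (hS1 _ hij).1
    have hmem : eIJ i j ∈ M :=
      AddSubmonoid.subset_closure ⟨(i, j), hij, rfl⟩
    exact suppIn_ringZpow (cc_one_sub hi j) (suppIn_one_sub hmem) c
  constructor
  · -- a vanishes off S ⇒ b vanishes off S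
    intro ha
    have key : ∀ k : ℕ, ∀ m n : ℕ, 1 ≤ m → 1 ≤ n → (m, n) ∉ S → m + n = k → b m n = 0 := by
      intro k
      induction k using Nat.strong_induction_on with
      | _ k IH =>
        intro m n hm hn hmS hk
        have hamn := hab m n hm hn
        rw [← Finset.prod_product'] at hamn
        have hmem : (m, n) ∈ Finset.Icc 1 m ×ˢ Finset.Icc 1 n := by
          simp [Finset.mem_product, hm, hn]
        rw [← Finset.mul_prod_erase _ _ hmem] at hamn
        set P : MvPowerSeries (Fin 2) ℤ :=
          ∏ p ∈ (Finset.Icc 1 m ×ˢ Finset.Icc 1 n).erase (m, n),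
            ringZpow (1 - (X (0 : Fin 2) : MvPowerSeries (Fin 2) ℤ) ^ p.1 * X 1 ^ p.2)
              (b p.1 p.2) with hP
        set g : MvPowerSeries (Fin 2) ℤ :=
          ringZpow (1 - (X (0 : Fin 2) : MvPowerSeries (Fin 2) ℤ) ^ m * X 1 ^ n) (b m n)
          with hg
        have hgc : constantCoeff g = 1 := cc_ringZpow (cc_one_sub hm n) _
        have hgsupp : suppIn (AddSubmonoid.closure {eIJ m n}) g :=
          suppIn_ringZpow (cc_one_sub hm n)
            (suppIn_one_sub (AddSubmonoid.subset_closure (Set.mem_singleton (eIJ m n)))) _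
        have hPcc : constantCoeff P = 1 := by
          rw [hP, map_prod]
          refine Finset.prod_eq_one ?_
          rintro ⟨i, j⟩ hij
          have hi : 1 ≤ i := by
            have := (Finset.mem_product.mp (Finset.mem_of_mem_erase hij)).1
            exact (Finset.mem_Icc.mp this).1
          exact cc_ringZpow (cc_one_sub hi j) _
        have hPsupp : suppIn M P := by
          rw [hP]
          refine Finset.prod_induction _ (suppIn M) (fun _ _ => suppIn_mul)
            (suppIn_one M) ?_
          rintro ⟨i, j⟩ hij
          rw [Finset.mem_erase] at hij
          obtain ⟨hne, hij'⟩ := hij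
          rw [Finset.mem_product, Finset.mem_Icc, Finset.mem_Icc] at hij'
          by_cases hijS : (i, j) ∈ S
          · exact hfacS i j hijS _
          · have hlt : i + j < k := by
              have : i ≠ m ∨ j ≠ n := by
                by_contra hc
                push_neg at hc
                exact hne (Prod.ext hc.1 hc.2)
              omega
            have hbz : b i j = 0 :=
              IH _ hlt i j hij'.1.1 hij'.2.1 hijS rfl
            rw [hbz]
            have : ringZpow (1 - (X (0 : Fin 2) : MvPowerSeries (Fin 2) ℤ) ^ i * X 1 ^ j)
                (0 : ℤ) = 1 := by
              simp [ringZpow]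
            rw [this]
            exact suppIn_one M
        have hcoeff : coeffUT m n (g * P) =
            MvPowerSeries.coeff (eIJ m n) (g * P) := rfl
        rw [hcoeff, coeff_mul_split hm n P hgsupp] at hamn
        have hcPe : MvPowerSeries.coeff (eIJ m n) P = 0 := by
          by_contra hne
          exact hmS (hMS m n hm (hPsupp _ hne))
        have hcge : MvPowerSeries.coeff (eIJ m n) g = -(b m n) :=
          coeff_e_ringZpow hm hn _
        rw [hcPe, hcge, MvPowerSeries.coeff_zero_eq_constantCoeff] at hamn
        simp only [hgc, hPcc, mul_zero, mul_one, one_mul, zero_add] at hamn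
        have haz : a m n = 0 := ha m n hm hn hmS
        omega
    intro i j hi hj hij
    exact key (i + j) i j hi hj hij rfl
  · -- b vanishes off S ⇒ a vanishes off S
    intro hb m n hm hn hmS
    have hamn := hab m n hm hn
    rw [← Finset.prod_product'] at hamn
    have hsupp : suppIn M (∏ p ∈ Finset.Icc 1 m ×ˢ Finset.Icc 1 n,
        ringZpow (1 - (X (0 : Fin 2) : MvPowerSeries (Fin 2) ℤ) ^ p.1 * X 1 ^ p.2)
          (b p.1 p.2)) := by
      refine Finset.prod_induction _ (suppIn M) (fun _ _ => suppIn_mul)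
        (suppIn_one M) ?_
      rintro ⟨i, j⟩ hij
      rw [Finset.mem_product, Finset.mem_Icc, Finset.mem_Icc] at hij
      by_cases hijS : (i, j) ∈ S
      · exact hfacS i j hijS _
      · have hbz : b i j = 0 := hb i j hij.1.1 hij.2.1 hijS
        rw [hbz]
        have : ringZpow (1 - (X (0 : Fin 2) : MvPowerSeries (Fin 2) ℤ) ^ i * X 1 ^ j)
            (0 : ℤ) = 1 := by
          simp [ringZpow]
        rw [this]
        exact suppIn_one M
    by_contra hne
    have : MvPowerSeries.coeff (eIJ m n) (∏ p ∈ Finset.Icc 1 m ×ˢ Finset.Icc 1 n,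
        ringZpow (1 - (X (0 : Fin 2) : MvPowerSeries (Fin 2) ℤ) ^ p.1 * X 1 ^ p.2)
          (b p.1 p.2)) ≠ 0 := by
      have hamn' : a m n = MvPowerSeries.coeff (eIJ m n)
          (∏ p ∈ Finset.Icc 1 m ×ˢ Finset.Icc 1 n,
            ringZpow (1 - (X (0 : Fin 2) : MvPowerSeries (Fin 2) ℤ) ^ p.1 * X 1 ^ p.2)
              (b p.1 p.2)) := hamn
      rw [← hamn']
      exact hne
    exact hmS (hMS m n hm (hsupp _ this))
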